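/- Let G : ℝ → ℝ be locally Lipschitz and suppose there exists R > 0 such that the improper integral ∫_R^∞ 1/G(u) du converges to a finite negative value (in particular G(u) < 0 for u ≥ R). For x ∈ ℝ let ψ_t(x) denote the unique solution of the ODE dψ/dt = G(ψ) with ψ_0 = x. Then for every t > 0 the limit ψ_t(∞) := lim_{x → ∞} ψ_t(x) exists and is finite. -/

import Mathlib

open MeasureTheory Filter

/-- descent from infinity for the ODE dψ/dt = G(ψ). -/
theorem stmt_0
    (G : ℝ → ℝ) (hG : LocallyLipschitz G)
    (R : ℝ) (hR : 0 < R)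
    (hGneg : ∀ u, R ≤ u → G u < 0)
    (hInt : IntegrableOn (fun u => 1 / G u) (Set.Ici R))
    (hIntNeg : (∫ u in Set.Ici R, 1 / G u) < 0)
    (ψ : ℝ → ℝ → ℝ)
    (hψ0 : ∀ x, ψ 0 x = x)
    (hψ : ∀ x : ℝ, ∀ t ≥ (0:ℝ), HasDerivAt (fun s => ψ s x) (G (ψ t x)) t)
    (hmono : ∀ x₁ x₂ : ℝ, x₁ ≤ x₂ → ∀ t ≥ (0:ℝ), ψ t x₁ ≤ ψ t x₂) :
    ∀ t > (0:ℝ), ∃ L : ℝ, Tendsto (fun x => ψ t x) atTop (nhds L) := by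
  intro t ht
  have hGcont : Continuous G := hG.continuous
  have hfm : Measurable fun u => 1 / G u := measurable_const.div hGcont.measurable
  set I : ℝ := ∫ u in Set.Ici R, 1 / G u with hI
  set F : ℝ → ℝ := fun y => ∫ u in R..y, 1 / G u with hF
  set T : ℝ → ℝ := fun y => ∫ u in Set.Ici y, 1 / G u with hT
  -- interval integrability on subintervals of [R, ∞)
  have hII : ∀ a b : ℝ, R ≤ a → a ≤ b →
      IntervalIntegrable (fun u => 1 / G u) volume a b := by
    intro a b haR hab
    apply IntegrableOn.intervalIntegrable
    apply hInt.mono_set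
    rw [Set.uIcc_of_le hab]
    exact fun u hu => le_trans haR hu.1
  -- splitting the integral
  have hsplit : ∀ y : ℝ, R ≤ y → I = F y + T y := by
    intro y hy
    have hdisj : Disjoint (Set.Ico R y) (Set.Ici y) := by
      apply Set.disjoint_left.mpr
      intro u hu hu'
      exact absurd hu' (not_le.mpr hu.2)
    have hunion : Set.Ico R y ∪ Set.Ici y = Set.Ici R := Set.Ico_union_Ici_eq_Ici hy
    have h1 : IntegrableOn (fun u => 1 / G u) (Set.Ico R y) :=
      hInt.mono_set (fun u hu => hu.1)
    have h2 : IntegrableOn (fun u => 1 / G u) (Set.Ici y) :=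
      hInt.mono_set (fun u hu => le_trans hy hu)
    have := setIntegral_union (μ := volume) (f := fun u => 1 / G u) hdisj
      measurableSet_Ici h1 h2
    rw [hunion] at this
    have hFico : F y = ∫ u in Set.Ico R y, 1 / G u := by
      show (∫ u in R..y, 1 / G u) = _
      rw [intervalIntegral.integral_of_le hy]
      exact (setIntegral_congr_set (Ico_ae_eq_Ioc)).symm
    rw [hI, this, hFico]
  -- T y ≤ 0 for y ≥ R
  have hTnonpos : ∀ y : ℝ, R ≤ y → T y ≤ 0 := by
    intro y hy
    apply setIntegral_nonpos measurableSet_Ici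
    intro u hu
    have : G u < 0 := hGneg u (le_trans hy hu)
    exact le_of_lt (div_neg_of_pos_of_neg one_pos this)
  -- tail integral tends to 0 along the sequence R + n
  have hT0 : Tendsto (fun n : ℕ => T (R + n)) atTop (nhds 0) := by
    have hunion : (⋃ n : ℕ, Set.Ico R (R + n)) = Set.Ici R := by
      ext u
      simp only [Set.mem_iUnion, Set.mem_Ico, Set.mem_Ici]
      constructor
      · rintro ⟨n, h1, _⟩; exact h1
      · intro hu
        refine ⟨⌊u - R⌋₊ + 1, hu, ?_⟩
        push_cast
        have := Nat.lt_floor_add_one (u - R)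
        linarith
    have hmonoS : Monotone fun n : ℕ => Set.Ico R (R + n) := by
      intro m n hmn
      have : (m:ℝ) ≤ n := Nat.cast_le.mpr hmn
      exact Set.Ico_subset_Ico le_rfl (by linarith)
    have htend := tendsto_setIntegral_of_monotone (μ := volume)
      (f := fun u => 1 / G u) (fun n : ℕ => measurableSet_Ico) hmonoS
      (by rw [hunion]; exact hInt)
    rw [hunion] at htend
    have heq : ∀ n : ℕ, T (R + n) = I - ∫ u in Set.Ico R (R + n), 1 / G u := by
      intro n
      have hRn : R ≤ R + n := le_add_of_nonneg_right (Nat.cast_nonneg n)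
      have := hsplit (R + n) hRn
      have hFeq : F (R + n) = ∫ u in Set.Ico R (R + n), 1 / G u := by
        show (∫ u in R..(R + (n:ℝ)), 1 / G u) = _
        rw [intervalIntegral.integral_of_le hRn]
        exact (setIntegral_congr_set (Ico_ae_eq_Ioc)).symm
      linarith [this, hFeq.symm.le]
    simp_rw [heq]
    have : Tendsto (fun n : ℕ => I - ∫ u in Set.Ico R (R + n), 1 / G u) atTop
        (nhds (I - I)) := tendsto_const_nhds.sub htend
    simpa using this
  -- choosing M with T M > -t
  obtain ⟨n, hn⟩ := (hT0.eventually (eventually_gt_nhds (by linarith : -t < 0))).exists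
  set M : ℝ := R + n with hM
  have hMR : R ≤ M := le_add_of_nonneg_right (Nat.cast_nonneg n)
  have hTM : -t < T M := hn
  -- the key uniform bound
  have hbound : ∀ x : ℝ, ψ t x ≤ M := by
    intro x
    by_contra hcon
    push_neg at hcon
    -- Step A : ψ reaches level M before time t
    have hA : ∃ s ∈ Set.Icc (0:ℝ) t, ψ s x ≤ M := by
      by_contra hall
      push_neg at hall
      have hx : M < x := by
        have := hall 0 ⟨le_refl 0, ht.le⟩
        rwa [hψ0] at this
      -- derivative of s ↦ F (ψ s x) - s is 0 on [0, t]
      have hderiv : ∀ s ∈ Set.Icc (0:ℝ) t,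
          HasDerivAt (fun s' => F (ψ s' x) - s') 0 s := by
        intro s hs
        have hy : M < ψ s x := hall s hs
        have hyR : R ≤ ψ s x := le_trans hMR hy.le
        have hGy : G (ψ s x) < 0 := hGneg _ hyR
        have hcont : ContinuousAt (fun u => 1 / G u) (ψ s x) :=
          continuousAt_const.div hGcont.continuousAt hGy.ne
        have hFd : HasDerivAt F (1 / G (ψ s x)) (ψ s x) :=
          intervalIntegral.integral_hasDerivAt_right (hII R (ψ s x) le_rfl hyR)
            hfm.aestronglyMeasurable.stronglyMeasurableAtFilter hcont
        have hcomp := hFd.comp s (hψ x s hs.1)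
        have : (1 / G (ψ s x)) * G (ψ s x) = 1 := one_div_mul_cancel hGy.ne
        rw [this] at hcomp
        have h2 := hcomp.sub (hasDerivAt_id' s)
        rw [sub_self] at h2
        exact h2
      have hconst := constant_of_has_deriv_right_zero
        (f := fun s' => F (ψ s' x) - s')
        (fun s hs => (hderiv s hs).continuousAt.continuousWithinAt)
        (fun s hs => ((hderiv s (Set.Ico_subset_Icc_self hs)).hasDerivWithinAt))
      have heq : F (ψ t x) - t = F (ψ 0 x) - 0 := hconst t (Set.right_mem_Icc.mpr ht.le)
      rw [hψ0] at heq
      -- heq : F (ψ t x) - t = F x - 0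
      have hxR : R ≤ x := le_trans hMR hx.le
      have hFx : F x = I - T x := by linarith [hsplit x hxR]
      have hFM : F M = I - T M := by linarith [hsplit M hMR]
      have hTx : T x ≤ 0 := hTnonpos x hxR
      -- F (ψ t x) ≤ F M
      have hFle : F (ψ t x) ≤ F M := by
        have hadd := intervalIntegral.integral_add_adjacent_intervals
          (hII R M le_rfl hMR) (hII M (ψ t x) hMR hcon.le)
        have hneg : 0 ≤ ∫ u in M..(ψ t x), -(1 / G u) := by
          apply intervalIntegral.integral_nonneg hcon.le
          intro u hu
          have : G u < 0 := hGneg u (le_trans hMR hu.1)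
          have := div_neg_of_pos_of_neg (one_pos (α := ℝ)) this
          linarith
        rw [intervalIntegral.integral_neg] at hneg
        have : (∫ u in M..(ψ t x), 1 / G u) ≤ 0 := by linarith
        rw [hF]
        linarith [hadd]
      linarith
    -- Step B : once below M, stays below M
    obtain ⟨s, hs, hψs⟩ := hA
    have hψcont : ContinuousOn (fun s' => ψ s' x) (Set.Icc s t) := by
      intro s' hs'
      exact ((hψ x s' (le_trans hs.1 hs'.1)).continuousAt).continuousWithinAt
    set S : Set ℝ := Set.Icc s t ∩ {s' | ψ s' x ≤ M} with hS
    have hScl : IsClosed S :=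
      hψcont.preimage_isClosed_of_isClosed isClosed_Icc isClosed_Iic
    have hSne : S.Nonempty := ⟨s, ⟨le_refl s, hs.2⟩, hψs⟩
    have hSbdd : BddAbove S := ⟨t, fun z hz => hz.1.2⟩
    set u : ℝ := sSup S with hu
    have huS : u ∈ S := hScl.csSup_mem hSne hSbdd
    have hut : u < t := by
      rcases lt_or_eq_of_le huS.1.2 with h | h
      · exact h
      · exfalso; have := huS.2; rw [h] at this; exact absurd this (not_le.mpr hcon)
    have hgt : ∀ s' ∈ Set.Ioc u t, M < ψ s' x := by
      intro s' hs'
      by_contra hle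
      push_neg at hle
      have hs'S : s' ∈ S := ⟨⟨le_trans huS.1.1 hs'.1.le, hs'.2⟩, hle⟩
      exact absurd (le_csSup hSbdd hs'S) (not_le.mpr hs'.1)
    have hu0 : (0:ℝ) ≤ u := le_trans hs.1 huS.1.1
    -- MVT on [u, t]
    obtain ⟨c, hc, hceq⟩ := exists_hasDerivAt_eq_slope (fun s' => ψ s' x)
      (fun s' => G (ψ s' x)) hut
      (fun s' hs' => ((hψ x s' (le_trans hu0 hs'.1)).continuousAt).continuousWithinAt)
      (fun s' hs' => hψ x s' (le_trans hu0 hs'.1.le))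
    have hMc : M < ψ c x := hgt c ⟨hc.1, hc.2.le⟩
    have hGc : G (ψ c x) < 0 := hGneg _ (le_trans hMR hMc.le)
    have htu : (0:ℝ) < t - u := by linarith
    have : ψ t x - ψ u x = G (ψ c x) * (t - u) := by
      field_simp at hceq
      linarith [hceq]
    have huM : ψ u x ≤ M := huS.2
    linarith [this, mul_neg_of_neg_of_pos hGc htu]
  -- conclusion: monotone and bounded
  have hmon : Monotone fun x => ψ t x := fun a b hab => hmono a b hab t ht.le
  have hbdd : BddAbove (Set.range fun x => ψ t x) := by
    refine ⟨M, ?_⟩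
    rintro _ ⟨x, rfl⟩
    exact hbound x
  exact ⟨_, tendsto_atTop_ciSup hmon hbdd⟩
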